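/- An alternating permutation σ maximizes inversion number over all alternating permutations τ whose vertex set contains the exclusion set of σ: if excl(σ) ⊆ vert(τ) for an alternating τ, then inv(τ) ≤ inv(σ). -/

import Mathlib

open Finset

/-- `σ` (0-indexed) is an alternating permutation: `σ 0 < σ 1 > σ 2 < …`. -/
def IsAlternating {n : ℕ} (σ : Equiv.Perm (Fin n)) : Prop :=
  ∀ i j : Fin n, (j : ℕ) = (i : ℕ) + 1 →
    ((Even (i : ℕ) → σ i < σ j) ∧ (Odd (i : ℕ) → σ j < σ i))

/-- `k` (a 1-indexed value, `1 ≤ k ≤ n-1`) is a swap of `σ`: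
writing `i, j` for the 0-indexed values `k-1, k`, we have `σ⁻¹(k) < σ⁻¹(k+1) - 1`. -/
def IsSwap {n : ℕ} (σ : Equiv.Perm (Fin n)) (k : ℕ) : Prop :=
  ∃ i j : Fin n, (i : ℕ) + 1 = k ∧ (j : ℕ) = k ∧ ((σ.symm i : ℕ) + 1 < (σ.symm j : ℕ))

instance {n : ℕ} (σ : Equiv.Perm (Fin n)) : DecidablePred (IsSwap σ) := fun k => by
  unfold IsSwap; infer_instance

/-- The set of swaps of `σ` (as 1-indexed values). -/
def swapSet {n : ℕ} (σ : Equiv.Perm (Fin n)) : Finset ℕ :=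
  (Finset.range n).filter (fun k => IsSwap σ k)

/-- The number of swaps of `σ`. -/
def swapCount {n : ℕ} (σ : Equiv.Perm (Fin n)) : ℕ := (swapSet σ).card

/-- Number of inversions of `σ`. -/
def invNum {n : ℕ} (σ : Equiv.Perm (Fin n)) : ℕ :=
  (Finset.univ.filter (fun p : Fin n × Fin n => p.1 < p.2 ∧ σ p.2 < σ p.1)).card

/-- The vertex `v_k^σ` (for `0 ≤ k ≤ n`): all-ones minus the sum of `e_{σ⁻¹(m)}`
for the first `k` values `m`. -/
def vtx {n : ℕ} (σ : Equiv.Perm (Fin n)) (k : ℕ) : Fin n → ℕ :=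
  fun j => if (σ j : ℕ) < k then 0 else 1

/-- The vertex set `vert(σ) = {v_0^σ, …, v_n^σ}` of the simplex `Δ^σ`. -/
def vert {n : ℕ} (σ : Equiv.Perm (Fin n)) : Finset (Fin n → ℕ) :=
  (Finset.range (n + 1)).image (vtx σ)

/-- The exclusion set of `σ`: vertices `v_k^σ` with `k` a swap of `σ`. -/
def excl {n : ℕ} (σ : Equiv.Perm (Fin n)) : Finset (Fin n → ℕ) :=
  (((Finset.range (n + 1)).filter (fun k => IsSwap σ k))).image (vtx σ)

/-- `σ` swaps to `τ`: `τ` is obtained from `σ` by exchanging two consecutive values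
`i < j = i+1` (0-indexed) at a swap position. -/
def SwapsTo {n : ℕ} (σ τ : Equiv.Perm (Fin n)) : Prop :=
  ∃ i j : Fin n, (j : ℕ) = (i : ℕ) + 1 ∧ ((σ.symm i : ℕ) + 1 < (σ.symm j : ℕ)) ∧
    τ = Equiv.swap i j * σ

/-- The order relation of the zig-zag poset `Z_n` (0-indexed): even indices are minimal,
odd indices are maximal, and an even index lies below its odd neighbours. -/
def zigzagLE {n : ℕ} (i j : Fin n) : Prop :=
  i = j ∨ (Odd (j : ℕ) ∧ ((i : ℕ) + 1 = (j : ℕ) ∨ (i : ℕ) = (j : ℕ) + 1))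

/-- A (down-closed) order ideal of the zig-zag poset `Z_n`. -/
def IsOrderIdeal {n : ℕ} (I : Finset (Fin n)) : Prop :=
  ∀ i j : Fin n, zigzagLE i j → j ∈ I → i ∈ I

/-- The Euler zig-zag number: the number of alternating permutations of length `n`. -/
noncomputable def eulerZigzag (n : ℕ) : ℕ := Nat.card {σ : Equiv.Perm (Fin n) // IsAlternating σ}

section AuxiliaryLemmas

lemma swap_lt_iff {n : ℕ} {i j : Fin n} (hij : (j:ℕ) = (i:ℕ) + 1) (u v : Fin n) :
    Equiv.swap i j u < Equiv.swap i j v ↔ ((u = j ∧ v = i) ∨ (u < v ∧ ¬(u = i ∧ v = j))) := by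
  have hval : ∀ w : Fin n, ((Equiv.swap i j w : Fin n) : ℕ)
      = if (w:ℕ) = (i:ℕ) then (j:ℕ) else if (w:ℕ) = (j:ℕ) then (i:ℕ) else (w:ℕ) := by
    intro w
    by_cases h1 : w = i
    · subst h1; rw [Equiv.swap_apply_left]; simp
    · by_cases h2 : w = j
      · subst h2
        rw [Equiv.swap_apply_right]
        have : (w:ℕ) ≠ (i:ℕ) := fun h => h1 (Fin.ext h)
        simp [this]
      · rw [Equiv.swap_apply_of_ne_of_ne h1 h2]
        have e1 : (w:ℕ) ≠ (i:ℕ) := fun h => h1 (Fin.ext h)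
        have e2 : (w:ℕ) ≠ (j:ℕ) := fun h => h2 (Fin.ext h)
        simp [e1, e2]
  simp only [Fin.lt_def, Fin.ext_iff, hval]
  split_ifs <;> omega

lemma move {n : ℕ} (τ : Equiv.Perm (Fin n)) (hτ : IsAlternating τ) {k : ℕ} (hk : IsSwap τ k) :
    ∃ τ' : Equiv.Perm (Fin n), IsAlternating τ' ∧ invNum τ' = invNum τ + 1 ∧
      ∀ m, m ≠ k → ∀ x : Fin n, ((τ' x : ℕ) < m ↔ (τ x : ℕ) < m) := by
  obtain ⟨i, j, hi, hj, hlt⟩ := hk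
  have hij : (j:ℕ) = (i:ℕ) + 1 := by omega
  refine ⟨Equiv.swap i j * τ, ?_, ?_, ?_⟩
  · -- alternating
    intro p q hpq
    have hτpq := hτ p q hpq
    have h1 : ¬(τ p = i ∧ τ q = j) := by
      rintro ⟨e1, e2⟩
      have : τ.symm i = p := by rw [← e1]; exact τ.symm_apply_apply p
      have h2 : τ.symm j = q := by rw [← e2]; exact τ.symm_apply_apply q
      rw [this, h2] at hlt
      omega
    have h2 : ¬(τ p = j ∧ τ q = i) := by
      rintro ⟨e1, e2⟩
      have : τ.symm j = p := by rw [← e1]; exact τ.symm_apply_apply p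
      have h2 : τ.symm i = q := by rw [← e2]; exact τ.symm_apply_apply q
      rw [this, h2] at hlt
      omega
    have key : ∀ a b : Fin n, ¬(τ a = i ∧ τ b = j) → ¬(τ a = j ∧ τ b = i) →
        ((Equiv.swap i j * τ) a < (Equiv.swap i j * τ) b ↔ τ a < τ b) := by
      intro a b ha hb
      simp only [Equiv.Perm.mul_apply]
      rw [swap_lt_iff hij]
      constructor
      · rintro (⟨e1, e2⟩ | ⟨hlt', _⟩)
        · exact absurd ⟨e1, e2⟩ hb
        · exact hlt'
      · intro hlt'
        right
        exact ⟨hlt', ha⟩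
    constructor
    · intro hev
      rw [key p q h1 h2]
      exact hτpq.1 hev
    · intro hodd
      rw [key q p (fun ⟨e1, e2⟩ => h2 ⟨e2, e1⟩) (fun ⟨e1, e2⟩ => h1 ⟨e2, e1⟩)]
      exact hτpq.2 hodd
  · -- invNum
    have ha : (τ.symm i : ℕ) < (τ.symm j : ℕ) := by omega
    have hab : τ.symm i < τ.symm j := ha
    have hmem : (τ.symm i, τ.symm j) ∉
        (Finset.univ.filter (fun p : Fin n × Fin n => p.1 < p.2 ∧ τ p.2 < τ p.1)) := by
      simp only [mem_filter, mem_univ, true_and, not_and]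
      intro _
      simp only [Equiv.apply_symm_apply, not_lt]
      exact le_of_lt (Fin.lt_def.mpr (by omega))
    have hset : (Finset.univ.filter
          (fun p : Fin n × Fin n => p.1 < p.2 ∧ (Equiv.swap i j * τ) p.2 < (Equiv.swap i j * τ) p.1))
        = insert (τ.symm i, τ.symm j)
          (Finset.univ.filter (fun p : Fin n × Fin n => p.1 < p.2 ∧ τ p.2 < τ p.1)) := by
      ext ⟨p, q⟩
      simp only [mem_filter, mem_univ, true_and, mem_insert, Prod.mk.injEq]
      simp only [Equiv.Perm.mul_apply]
      rw [swap_lt_iff hij]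
      constructor
      · rintro ⟨hpq, (⟨e1, e2⟩ | ⟨hlt', hn⟩)⟩
        · left
          constructor
          · rw [← e2]; exact (τ.symm_apply_apply p).symm
          · rw [← e1]; exact (τ.symm_apply_apply q).symm
        · right; exact ⟨hpq, hlt'⟩
      · rintro (⟨e1, e2⟩ | ⟨hpq, hlt'⟩)
        · subst e1; subst e2
          refine ⟨hab, Or.inl ⟨?_, ?_⟩⟩ <;> simp
        · refine ⟨hpq, Or.inr ⟨hlt', ?_⟩⟩
          rintro ⟨e1, e2⟩
          have hp : τ.symm i = q := by rw [← e1]; exact τ.symm_apply_apply q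
          have hq : τ.symm j = p := by rw [← e2]; exact τ.symm_apply_apply p
          rw [← hp, ← hq] at hpq
          simp only [Fin.lt_def] at hpq
          omega
    unfold invNum
    rw [hset, card_insert_of_notMem hmem]
  · -- vtx values
    intro m hm x
    simp only [Equiv.Perm.mul_apply]
    by_cases h1 : τ x = i
    · rw [h1, Equiv.swap_apply_left]; omega
    · by_cases h2 : τ x = j
      · rw [h2, Equiv.swap_apply_right]; omega
      · rw [Equiv.swap_apply_of_ne_of_ne h1 h2]

/-- In a block `[k, b)` with no swaps, the position of value `k` is determined by
the block's position set `Q` alone. -/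
lemma keypos {n : ℕ} (σ : Equiv.Perm (Fin n)) (hσ : IsAlternating σ) (k b : ℕ)
    (hkb : k < b) (hbn : b ≤ n)
    (hns : ∀ m, k < m → m < b → ¬IsSwap σ m)
    (Q : Finset (Fin n)) (hQ : ∀ x : Fin n, x ∈ Q ↔ (k ≤ (σ x:ℕ) ∧ (σ x:ℕ) < b))
    (M : Fin n) (hM : M ∈ Q) (hMmax : ∀ x ∈ Q, (x:ℕ) ≤ (M:ℕ)) :
    ((σ.symm ⟨k, lt_of_lt_of_le hkb hbn⟩ : ℕ))
      = (if (Odd (M:ℕ) ∧ ∃ x ∈ Q, (x:ℕ) + 1 = (M:ℕ)) then (M:ℕ) - 1 else (M:ℕ)) := by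
  classical
  have hkn : k < n := lt_of_lt_of_le hkb hbn
  set kf : Fin n := ⟨k, hkn⟩ with hkf
  set p : Fin n := σ.symm kf with hp
  -- the bound lemma
  have bound : ∀ v : ℕ, k ≤ v → ∀ hv : v < b,
      ((σ.symm ⟨v, lt_of_lt_of_le hv hbn⟩ : ℕ)) ≤ (p:ℕ) + (if Even (p:ℕ) then 1 else 0) := by
    intro v hkv
    induction v, hkv using Nat.le_induction with
    | base =>
      intro hv
      simp only [hp, hkf]
      split_ifs <;> omega
    | succ v hkv IH =>
      intro hv
      have hvb : v < b := by omega
      have hvn : v < n := by omega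
      have hv1n : v + 1 < n ∨ v + 1 = n := by omega
      have hv1n' : v + 1 < n := lt_of_lt_of_le hv hbn
      set q : Fin n := σ.symm ⟨v, hvn⟩ with hq
      set q' : Fin n := σ.symm ⟨v+1, hv1n'⟩ with hq'
      have hIH : (q:ℕ) ≤ (p:ℕ) + (if Even (p:ℕ) then 1 else 0) := IH hvb
      -- no swap at v+1
      have hnsw : ¬IsSwap σ (v+1) := hns (v+1) (by omega) hv
      have hchain : (q':ℕ) ≤ (q:ℕ) + 1 := by
        by_contra hcon
        exact hnsw ⟨⟨v, hvn⟩, ⟨v+1, hv1n'⟩, rfl, rfl, by omega⟩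
      rcases Nat.lt_or_ge (q':ℕ) ((q:ℕ)+1) with hlt | hge
      · omega
      · -- q' = q + 1 : adjacent positions, values v < v+1, so q is even
        have hadj : (q':ℕ) = (q:ℕ) + 1 := by omega
        have halt := hσ q q' hadj
        have hqev : Even (q:ℕ) := by
          rcases Nat.even_or_odd (q:ℕ) with he | ho
          · exact he
          · exfalso
            have := halt.2 ho
            simp only [hq, hq', Equiv.apply_symm_apply, Fin.lt_def] at this
            omega
        -- parity excludes q = p + ε
        rcases Nat.even_or_odd (p:ℕ) with hpe | hpo
        · simp only [if_pos hpe] at hIH ⊢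
          obtain ⟨a, ha⟩ := hqev
          obtain ⟨c, hc⟩ := hpe
          omega
        · have : ¬ Even (p:ℕ) := by simp [Nat.not_even_iff_odd.mpr hpo]
          simp only [if_neg this] at hIH ⊢
          obtain ⟨a, ha⟩ := hqev
          obtain ⟨c, hc⟩ := hpo
          omega
  have hpQ : p ∈ Q := by
    rw [hQ]
    simp only [hp, Equiv.apply_symm_apply, hkf]
    exact ⟨le_refl k, hkb⟩
  have hple : (p:ℕ) ≤ (M:ℕ) := hMmax p hpQ
  have hMle : (M:ℕ) ≤ (p:ℕ) + (if Even (p:ℕ) then 1 else 0) := by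
    have h1 : k ≤ (σ M : ℕ) ∧ (σ M : ℕ) < b := (hQ M).mp hM
    have h2 := bound (σ M : ℕ) h1.1 h1.2
    have h3 : (⟨(σ M : ℕ), lt_of_lt_of_le h1.2 hbn⟩ : Fin n) = σ M := Fin.ext rfl
    rw [h3, Equiv.symm_apply_apply] at h2
    exact h2
  by_cases hC : Odd (M:ℕ) ∧ ∃ x ∈ Q, (x:ℕ) + 1 = (M:ℕ)
  · rw [if_pos hC]
    obtain ⟨hModd, x, hxQ, hx1⟩ := hC
    -- show p ≠ M
    have hpneM : (p:ℕ) ≠ (M:ℕ) := by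
      intro he
      -- x is at position M-1, value ≥ k; alternating at (x, p) forces σ x < k
      have hadj : (p:ℕ) = (x:ℕ) + 1 := by omega
      have halt := hσ x p hadj
      have hxev : Even (x:ℕ) := by
        obtain ⟨c, hc⟩ := hModd
        exact ⟨c, by omega⟩
      have hlt := halt.1 hxev
      simp only [hp, Equiv.apply_symm_apply, Fin.lt_def, hkf] at hlt
      have := (hQ x).mp hxQ
      omega
    split_ifs at hMle <;> omega
  · rw [if_neg hC]
    by_contra hne
    have hplt : (p:ℕ) < (M:ℕ) := by omega
    have hpev : Even (p:ℕ) := by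
      by_contra hpo
      rw [if_neg hpo] at hMle
      omega
    rw [if_pos hpev] at hMle
    have hMp1 : (M:ℕ) = (p:ℕ) + 1 := by omega
    exact hC ⟨hMp1 ▸ Even.add_one hpev, p, hpQ, by omega⟩

lemma rigid {n : ℕ} (σ τ : Equiv.Perm (Fin n)) (hσ : IsAlternating σ) (hτ : IsAlternating τ)
    (H : ∀ c, (IsSwap σ c ∨ IsSwap τ c) → ∀ x : Fin n, ((σ x:ℕ) < c ↔ (τ x:ℕ) < c)) :
    σ = τ := by
  classical
  have key : ∀ k : ℕ, ∀ v : Fin n, (v:ℕ) = k → σ.symm v = τ.symm v := by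
    intro k
    induction k using Nat.strong_induction_on with
    | _ k IH =>
      intro v hv
      have hkn : k < n := hv ▸ v.isLt
      -- positions of smaller values agree
      have Pk : ∀ x : Fin n, ((σ x:ℕ) < k ↔ (τ x:ℕ) < k) := by
        intro x
        constructor
        · intro hx
          have h1 : σ.symm (σ x) = τ.symm (σ x) := IH (σ x:ℕ) hx (σ x) rfl
          rw [Equiv.symm_apply_apply] at h1
          have h2 : τ x = σ x := (Equiv.eq_symm_apply _).mp h1
          rw [h2]; exact hx
        · intro hx
          have h1 : σ.symm (τ x) = τ.symm (τ x) := IH (τ x:ℕ) hx (τ x) rfl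
          rw [Equiv.symm_apply_apply] at h1
          have h2 : σ x = τ x := (Equiv.eq_symm_apply _).mp h1.symm
          rw [h2]; exact hx
      -- the next cut above k
      have hex : ∃ c, k < c ∧ (c = n ∨ IsSwap σ c ∨ IsSwap τ c) := ⟨n, hkn, Or.inl rfl⟩
      set b := Nat.find hex with hbdef
      obtain ⟨hkb, hbcut⟩ := Nat.find_spec hex
      have hbn : b ≤ n := Nat.find_le ⟨hkn, Or.inl rfl⟩
      have Pb : ∀ x : Fin n, ((σ x:ℕ) < b ↔ (τ x:ℕ) < b) := by
        rcases hbcut with hb | hb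
        · intro x; rw [hbdef, hb]; simp [x.isLt]
        · exact H b hb
      have hnsσ : ∀ m, k < m → m < b → ¬IsSwap σ m := by
        intro m h1 h2 hsw
        exact Nat.find_min hex h2 ⟨h1, Or.inr (Or.inl hsw)⟩
      have hnsτ : ∀ m, k < m → m < b → ¬IsSwap τ m := by
        intro m h1 h2 hsw
        exact Nat.find_min hex h2 ⟨h1, Or.inr (Or.inr hsw)⟩
      -- common block position set
      set Q : Finset (Fin n) := univ.filter (fun x => k ≤ (σ x:ℕ) ∧ (σ x:ℕ) < b) with hQdef
      have hQσ : ∀ x : Fin n, x ∈ Q ↔ (k ≤ (σ x:ℕ) ∧ (σ x:ℕ) < b) := by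
        intro x; simp [hQdef]
      have hQτ : ∀ x : Fin n, x ∈ Q ↔ (k ≤ (τ x:ℕ) ∧ (τ x:ℕ) < b) := by
        intro x
        rw [hQσ x]
        constructor
        · rintro ⟨h1, h2⟩
          exact ⟨le_of_not_gt (fun hc => absurd ((Pk x).mpr hc) (not_lt.mpr h1)),
            (Pb x).mp h2⟩
        · rintro ⟨h1, h2⟩
          exact ⟨le_of_not_gt (fun hc => absurd ((Pk x).mp hc) (not_lt.mpr h1)),
            (Pb x).mpr h2⟩
      have hQne : Q.Nonempty := ⟨σ.symm ⟨k, hkn⟩, by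
        rw [hQσ]
        simp only [Equiv.apply_symm_apply]
        exact ⟨le_refl k, hkb⟩⟩
      set M : Fin n := Q.max' hQne with hMdef
      have hM : M ∈ Q := Q.max'_mem hQne
      have hMmax : ∀ x ∈ Q, (x:ℕ) ≤ (M:ℕ) := fun x hx => Q.le_max' x hx
      have e1 := keypos σ hσ k b hkb hbn hnsσ Q hQσ M hM hMmax
      have e2 := keypos τ hτ k b hkb hbn hnsτ Q hQτ M hM hMmax
      have : ((σ.symm ⟨k, lt_of_lt_of_le hkb hbn⟩ : Fin n) : ℕ)
          = ((τ.symm ⟨k, lt_of_lt_of_le hkb hbn⟩ : Fin n) : ℕ) := by rw [e1, e2]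
      have hvk : v = ⟨k, lt_of_lt_of_le hkb hbn⟩ := Fin.ext hv
      rw [hvk]
      exact Fin.ext this
  ext x
  have h1 : σ.symm (τ x) = τ.symm (τ x) := key (τ x:ℕ) (τ x) rfl
  rw [Equiv.symm_apply_apply] at h1
  exact congrArg Fin.val ((Equiv.eq_symm_apply σ).mp h1.symm)

lemma card_val_lt {n : ℕ} (π : Equiv.Perm (Fin n)) (m : ℕ) (hm : m ≤ n) :
    (univ.filter fun x : Fin n => ((π x:ℕ) < m)).card = m := by
  have hmap : (univ.filter fun x : Fin n => ((π x:ℕ) < m))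
      = (univ.filter fun v : Fin n => ((v:ℕ) < m)).map
        ⟨π.symm, π.symm.injective⟩ := by
    ext x
    simp only [mem_filter, mem_univ, true_and, mem_map, Function.Embedding.coeFn_mk]
    constructor
    · intro hx
      exact ⟨π x, hx, π.symm_apply_apply x⟩
    · rintro ⟨v, hv, rfl⟩
      rwa [π.apply_symm_apply]
  rw [hmap, card_map]
  have : (univ.filter fun v : Fin n => ((v:ℕ) < m))
      = Finset.attachFin (range m) (fun g hg => lt_of_lt_of_le (mem_range.mp hg) hm) := by
    ext v
    simp [Finset.mem_attachFin]
  rw [this, Finset.card_attachFin, card_range]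

lemma invNum_le {n : ℕ} (π : Equiv.Perm (Fin n)) : invNum π ≤ n * n := by
  unfold invNum
  calc (univ.filter (fun p : Fin n × Fin n => p.1 < p.2 ∧ π p.2 < π p.1)).card
      ≤ (univ : Finset (Fin n × Fin n)).card := card_filter_le _ _
    _ = n * n := by simp [Fintype.card_prod]


lemma alt_loop {n : ℕ} (σ : Equiv.Perm (Fin n)) (hσ : IsAlternating σ) :
    ∀ d : ℕ, ∀ τ : Equiv.Perm (Fin n), IsAlternating τ →
      (∀ m, IsSwap σ m → ∀ x : Fin n, ((σ x:ℕ) < m ↔ (τ x:ℕ) < m)) →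
      n * n ≤ invNum τ + d → invNum τ ≤ invNum σ := by
  intro d
  induction d with
  | zero =>
    intro τ hτ H hd
    by_cases hmv : ∃ k, IsSwap τ k ∧ ¬IsSwap σ k
    · obtain ⟨k, hk, hknot⟩ := hmv
      obtain ⟨τ', hτ'alt, hτ'inv, hτ'iff⟩ := move τ hτ hk
      have := invNum_le τ'
      omega
    · push_neg at hmv
      have heq : σ = τ := rigid σ τ hσ hτ (by
        intro c hc x
        rcases hc with hc | hc
        · exact H c hc x
        · exact H c (hmv c hc) x)
      rw [heq]
  | succ d IH =>
    intro τ hτ H hd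
    by_cases hmv : ∃ k, IsSwap τ k ∧ ¬IsSwap σ k
    · obtain ⟨k, hk, hknot⟩ := hmv
      obtain ⟨τ', hτ'alt, hτ'inv, hτ'iff⟩ := move τ hτ hk
      have H' : ∀ m, IsSwap σ m → ∀ x : Fin n, ((σ x:ℕ) < m ↔ (τ' x:ℕ) < m) := by
        intro m hm x
        have hne : m ≠ k := fun he => hknot (he ▸ hm)
        rw [hτ'iff m hne x]
        exact H m hm x
      have := IH τ' hτ'alt H' (by omega)
      omega
    · push_neg at hmv
      have heq : σ = τ := rigid σ τ hσ hτ (by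
        intro c hc x
        rcases hc with hc | hc
        · exact H c hc x
        · exact H c (hmv c hc) x)
      rw [heq]

end AuxiliaryLemmas

/-- an alternating permutation maximizes inversion number over all alternating
permutations whose vertex set contains its exclusion set. -/
theorem invNum_le_of_excl_subset_vert (n : ℕ) (σ τ : Equiv.Perm (Fin n))
    (hσ : IsAlternating σ) (hτ : IsAlternating τ) (h : excl σ ⊆ vert τ) :
    invNum τ ≤ invNum σ := by
  classical
  have H : ∀ m, IsSwap σ m → ∀ x : Fin n, ((σ x:ℕ) < m ↔ (τ x:ℕ) < m) := by
    intro m hm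
    have hmn : m < n := by
      obtain ⟨i, j, hi, hj, _⟩ := hm
      exact hj ▸ j.isLt
    have hmem : vtx σ m ∈ excl σ :=
      mem_image.mpr ⟨m, mem_filter.mpr ⟨mem_range.mpr (by omega), hm⟩, rfl⟩
    obtain ⟨m', hm', heq⟩ := mem_image.mp (h hmem)
    have hm'n : m' ≤ n := by
      have := mem_range.mp hm'
      omega
    have hiff : ∀ x : Fin n, ((τ x:ℕ) < m' ↔ (σ x:ℕ) < m) := by
      intro x
      have hx := congrFun heq x
      unfold vtx at hx
      by_cases h1 : (τ x:ℕ) < m' <;> by_cases h2 : (σ x:ℕ) < m <;>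
        simp [h1, h2] at hx ⊢
    have hmm : m' = m := by
      have c1 := card_val_lt τ m' hm'n
      have c2 := card_val_lt σ m (le_of_lt hmn)
      have hset : (univ.filter fun x : Fin n => ((τ x:ℕ) < m'))
          = (univ.filter fun x : Fin n => ((σ x:ℕ) < m)) := by
        ext x
        simp [hiff x]
      rw [← c1, ← c2, hset]
    subst hmm
    intro x
    exact (hiff x).symm
  exact alt_loop σ hσ (n * n) τ hτ H (by omega)
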